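/- arXiv:2311.00263 — 5 statements merged into one kernel-verified Lean document; each statement's English description precedes it below -/
import Mathlib

section
/- Let A, B be n×n real upper-triangular matrices with all diagonal entries of A bounded in absolute value by a < 1 and all diagonal entries of B bounded in absolute value by b < 1, and all entries of A and B bounded in absolute value by M. Then there exists a constant C such that for any finite product P = M_1 M_2 ⋯ M_k where each M_i ∈ {A, B}, the operator norm ‖P‖ ≤ C (i.e., arbitrary switched products of Schur-stable commuting-structure upper-triangular matrices are uniformly bounded, with no dwell-time constraint). -/
attribute [local instance] Matrix.linftyOpNormedRing

lemma row_bound_aux {n : ℕ} (X : Matrix (Fin n) (Fin n) ℝ) (r : ℝ) (hr : 0 ≤ r)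
    (h : ∀ i, ∑ j, |X i j| ≤ r) : ‖X‖ ≤ r := by
  rw [Matrix.linfty_opNorm_def, ← Real.coe_toNNReal r hr, NNReal.coe_le_coe]
  apply Finset.sup_le
  intro i _
  rw [← NNReal.coe_le_coe]
  push_cast [Real.coe_toNNReal r hr]
  simpa [Real.norm_eq_abs] using h i

theorem stmt4 (n : ℕ) (A B : Matrix (Fin n) (Fin n) ℝ)
    (hAtri : A.BlockTriangular id) (hBtri : B.BlockTriangular id)
    (a b M : ℝ) (ha : a < 1) (hb : b < 1) (hM : 0 < M)
    (hAdiag : ∀ i, |A i i| ≤ a) (hBdiag : ∀ i, |B i i| ≤ b)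
    (hAent : ∀ i j, |A i j| ≤ M) (hBent : ∀ i j, |B i j| ≤ M) :
    ∃ C : ℝ, ∀ (k : ℕ) (w : Fin k → Bool),
      ‖(List.ofFn (fun i => if w i then A else B)).prod‖ ≤ C := by
  -- setup
  set c : ℝ := max (max a b) 0 with hc_def
  have hc0 : 0 ≤ c := le_max_right _ _
  have hc1 : c < 1 := by
    simp only [hc_def, max_lt_iff]
    exact ⟨⟨ha, hb⟩, one_pos⟩
  set ε : ℝ := (1 - c) / (2 * (n * M + 1)) with hε_def
  have hden : (0:ℝ) < 2 * (n * M + 1) := by positivity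
  have hε0 : 0 < ε := div_pos (by linarith) hden
  have hε1 : ε ≤ 1 := by
    rw [hε_def, div_le_one hden]
    nlinarith [hM.le, (Nat.cast_nonneg n : (0:ℝ) ≤ n)]
  have hnMε : (n : ℝ) * M * ε ≤ (1 - c) / 2 := by
    have hn0 : (0:ℝ) ≤ (n:ℝ) * M := mul_nonneg (Nat.cast_nonneg n) hM.le
    rw [hε_def, mul_div_assoc', div_le_div_iff₀ hden two_pos]
    nlinarith [hc1]
  set c' : ℝ := (1 + c) / 2 with hc'_def
  have hc'0 : 0 ≤ c' := by positivity
  have hc'1 : c' ≤ 1 := by rw [hc'_def]; linarith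
  set D : Matrix (Fin n) (Fin n) ℝ := Matrix.diagonal (fun i => ε ^ (i : ℕ)) with hD_def
  set Dinv : Matrix (Fin n) (Fin n) ℝ :=
    Matrix.diagonal (fun i => (ε ^ (i : ℕ))⁻¹) with hDinv_def
  have hεpow : ∀ i : Fin n, ε ^ (i : ℕ) ≠ 0 := fun i => pow_ne_zero _ hε0.ne'
  have hDDinv : D * Dinv = 1 := by
    rw [hD_def, hDinv_def, Matrix.diagonal_mul_diagonal]
    rw [show (fun i : Fin n => ε ^ (i:ℕ) * (ε ^ (i:ℕ))⁻¹) = fun _ => (1:ℝ) by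
      funext i; exact mul_inv_cancel₀ (hεpow i)]
    exact Matrix.diagonal_one
  have hDinvD : Dinv * D = 1 := by
    rw [hD_def, hDinv_def, Matrix.diagonal_mul_diagonal]
    rw [show (fun i : Fin n => (ε ^ (i:ℕ))⁻¹ * ε ^ (i:ℕ)) = fun _ => (1:ℝ) by
      funext i; exact inv_mul_cancel₀ (hεpow i)]
    exact Matrix.diagonal_one
  -- key bound for a single factor
  have key : ∀ X : Matrix (Fin n) (Fin n) ℝ, X.BlockTriangular id →
      (∀ i, |X i i| ≤ c) → (∀ i j, |X i j| ≤ M) → ‖Dinv * X * D‖ ≤ c' := by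
    intro X htri hdiag hent
    apply row_bound_aux _ _ hc'0
    intro i
    have hentry : ∀ j, (Dinv * X * D) i j = (ε ^ (i:ℕ))⁻¹ * X i j * ε ^ (j:ℕ) := by
      intro j
      rw [hD_def, hDinv_def, Matrix.mul_diagonal, Matrix.diagonal_mul]
    have hterm : ∀ j ∈ Finset.univ.erase i, |(Dinv * X * D) i j| ≤ M * ε := by
      intro j hj
      have hji : j ≠ i := Finset.ne_of_mem_erase hj
      rcases lt_or_gt_of_ne hji with hlt | hgt
      · have : X i j = 0 := htri (by simpa using hlt)
        simp [hentry j, this, abs_nonneg, mul_nonneg hM.le hε0.le]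
      · -- j > i
        have h1 : |(Dinv * X * D) i j| = |X i j| * ε ^ ((j:ℕ) - (i:ℕ)) := by
          rw [hentry j, abs_mul, abs_mul, abs_inv, abs_pow, abs_pow,
            abs_of_pos hε0]
          have : (j:ℕ) = ((j:ℕ) - (i:ℕ)) + (i:ℕ) := by omega
          rw [this, pow_add]
          field_simp
          ring
          rw [Nat.add_sub_cancel]
        rw [h1]
        have h2 : ε ^ ((j:ℕ) - (i:ℕ)) ≤ ε := by
          have := pow_le_pow_of_le_one hε0.le hε1 (show 1 ≤ (j:ℕ) - (i:ℕ) by omega)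
          simpa using this
        exact mul_le_mul (hent i j) h2 (by positivity) hM.le
    have hdiagterm : |(Dinv * X * D) i i| ≤ c := by
      rw [hentry i, abs_mul, abs_mul, abs_inv, abs_pow, abs_of_pos hε0]
      have : (ε ^ (i:ℕ))⁻¹ * |X i i| * ε ^ (i:ℕ) = |X i i| := by
        field_simp
      rw [this]
      exact hdiag i
    have hcard : (((Finset.univ : Finset (Fin n)).erase i).card : ℝ) ≤ (n : ℝ) := by
      have h := Finset.card_le_card (Finset.erase_subset i (Finset.univ : Finset (Fin n)))
      simp only [Finset.card_univ, Fintype.card_fin] at h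
      exact_mod_cast h
    calc ∑ j, |(Dinv * X * D) i j|
        = |(Dinv * X * D) i i| + ∑ j ∈ Finset.univ.erase i, |(Dinv * X * D) i j| :=
          (Finset.add_sum_erase _ _ (Finset.mem_univ i)).symm
      _ ≤ c + ∑ j ∈ Finset.univ.erase i, (M * ε) :=
          add_le_add hdiagterm (Finset.sum_le_sum hterm)
      _ = c + ((Finset.univ : Finset (Fin n)).erase i).card * (M * ε) := by
          rw [Finset.sum_const, nsmul_eq_mul]
      _ ≤ c + n * (M * ε) :=
          add_le_add_right (mul_le_mul_of_nonneg_right hcard (mul_nonneg hM.le hε0.le)) c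
      _ ≤ c + (1 - c) / 2 := by rw [← mul_assoc]; linarith [hnMε]
      _ = c' := by rw [hc'_def]; ring
  -- products
  have hone : ‖(1 : Matrix (Fin n) (Fin n) ℝ)‖ ≤ 1 := by
    apply row_bound_aux _ _ zero_le_one
    intro i
    calc ∑ j, |(1 : Matrix (Fin n) (Fin n) ℝ) i j|
        = ∑ j, |Matrix.diagonal (fun _ => (1:ℝ)) i j| := by rw [Matrix.diagonal_one]
      _ ≤ 1 := by
          rw [Finset.sum_eq_single_of_mem i (Finset.mem_univ i)
            (fun j _ hj => by rw [Matrix.diagonal_apply_ne' _ hj, abs_zero])]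
          rw [Matrix.diagonal_apply_eq]
          norm_num
  have prodbound : ∀ L : List (Matrix (Fin n) (Fin n) ℝ),
      (∀ X ∈ L, X = A ∨ X = B) → ‖Dinv * L.prod * D‖ ≤ c' ^ L.length := by
    intro L
    induction L with
    | nil =>
      intro _
      rw [List.prod_nil, List.length_nil, pow_zero, Matrix.mul_one, hDinvD]
      exact hone
    | cons X L ih =>
      intro hmem
      have hX : X = A ∨ X = B := hmem X List.mem_cons_self
      have hL := ih (fun Y hY => hmem Y (List.mem_cons_of_mem _ hY))
      have hXb : ‖Dinv * X * D‖ ≤ c' := by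
        rcases hX with h | h
        · rw [h]
          exact key A hAtri (fun i => (hAdiag i).trans ((le_max_left a b).trans (le_max_left _ _))) hAent
        · rw [h]
          exact key B hBtri (fun i => (hBdiag i).trans ((le_max_right a b).trans (le_max_left _ _))) hBent
      have hsplit : Dinv * (X :: L).prod * D = (Dinv * X * D) * (Dinv * L.prod * D) := by
        rw [List.prod_cons]
        simp only [Matrix.mul_assoc]
        rw [← Matrix.mul_assoc D Dinv (L.prod * D), hDDinv, Matrix.one_mul]
      rw [hsplit, List.length_cons, pow_succ']
      calc ‖(Dinv * X * D) * (Dinv * L.prod * D)‖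
          ≤ ‖Dinv * X * D‖ * ‖Dinv * L.prod * D‖ := norm_mul_le _ _
        _ ≤ c' * c' ^ L.length := mul_le_mul hXb hL (norm_nonneg _) hc'0
  refine ⟨‖D‖ * ‖Dinv‖, fun k w => ?_⟩
  set L : List (Matrix (Fin n) (Fin n) ℝ) := List.ofFn (fun i => if w i then A else B) with hL_def
  have hmem : ∀ X ∈ L, X = A ∨ X = B := by
    intro X hX
    rw [hL_def, List.mem_ofFn] at hX
    obtain ⟨i, hi⟩ := hX
    by_cases h : w i
    · left; rw [← hi]; simp [h]
    · right; rw [← hi]; simp [h]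
  have hlen : L.length = k := by rw [hL_def, List.length_ofFn]
  have hP : L.prod = D * (Dinv * L.prod * D) * Dinv := by
    simp only [Matrix.mul_assoc]
    rw [hDDinv, Matrix.mul_one, ← Matrix.mul_assoc, hDDinv, Matrix.one_mul]
  calc ‖L.prod‖ = ‖D * (Dinv * L.prod * D) * Dinv‖ := by rw [← hP]
    _ ≤ ‖D * (Dinv * L.prod * D)‖ * ‖Dinv‖ := norm_mul_le _ _
    _ ≤ (‖D‖ * ‖Dinv * L.prod * D‖) * ‖Dinv‖ := by
        gcongr
        exact norm_mul_le _ _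
    _ ≤ (‖D‖ * 1) * ‖Dinv‖ := by
        have hbound : ‖Dinv * L.prod * D‖ ≤ 1 :=
          (prodbound L hmem).trans (pow_le_one₀ hc'0 hc'1)
        exact mul_le_mul_of_nonneg_right
          (mul_le_mul_of_nonneg_left hbound (norm_nonneg D)) (norm_nonneg Dinv)
    _ = ‖D‖ * ‖Dinv‖ := by ring
end

section
/- Let A, B be n×n real upper-triangular matrices whose diagonal entries all have absolute value at most ρ < 1, with all entries bounded by M > 0. Then any product M_1⋯M_k with M_i ∈ {A,B} converges to 0 as k → ∞; more precisely, for every ε with ρ < ρ+ε < 1 there exists C with ‖M_1⋯M_k‖ ≤ C(ρ+ε)^k. -/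
attribute [local instance] Matrix.linftyOpNormedRing

private lemma rowsum_norm_le (n : ℕ) (X : Matrix (Fin n) (Fin n) ℝ) (r : ℝ) (hr : 0 ≤ r)
    (h : ∀ i, ∑ j, |X i j| ≤ r) : ‖X‖ ≤ r := by
  rw [Matrix.linfty_opNorm_def]
  rw [show r = (r.toNNReal : ℝ) by simp [hr]]
  rw [NNReal.coe_le_coe]
  apply Finset.sup_le
  intro i _
  rw [← NNReal.coe_le_coe]
  push_cast
  simpa [Real.norm_eq_abs, hr] using h i

private lemma conj_list_prod {α : Type*} [Monoid α] (D E : α) (hDE : D * E = 1)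
    (hED : E * D = 1) : ∀ l : List α, (l.map fun X => E * X * D).prod = E * l.prod * D := by
  intro l
  induction l with
  | nil => simp only [List.map_nil, List.prod_nil, mul_one, hED]
  | cons a l ih =>
      simp only [List.map_cons, List.prod_cons, ih]
      simp only [mul_assoc]
      rw [← mul_assoc D E, hDE, one_mul]

private lemma list_prod_norm_le {α : Type*} [NormedRing α] (r : ℝ) (hr : 0 ≤ r)
    (h1 : ‖(1 : α)‖ ≤ 1) :
    ∀ l : List α, (∀ X ∈ l, ‖X‖ ≤ r) → ‖l.prod‖ ≤ r ^ l.length := by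
  intro l
  induction l with
  | nil => simpa using h1
  | cons a l ih =>
      intro h
      simp only [List.prod_cons, List.length_cons, pow_succ]
      calc ‖a * l.prod‖ ≤ ‖a‖ * ‖l.prod‖ := norm_mul_le _ _
        _ ≤ r * r ^ l.length := by
            apply mul_le_mul (h a (by simp)) (ih fun X hX => h X (by simp [hX]))
              (norm_nonneg _) hr
        _ = r ^ l.length * r := by ring

theorem stmt5 (n : ℕ) (A B : Matrix (Fin n) (Fin n) ℝ)
    (hAtri : A.BlockTriangular id) (hBtri : B.BlockTriangular id)
    (ρ M : ℝ) (hρ : ρ < 1) (hM : 0 < M)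
    (hAdiag : ∀ i, |A i i| ≤ ρ) (hBdiag : ∀ i, |B i i| ≤ ρ)
    (hAent : ∀ i j, |A i j| ≤ M) (hBent : ∀ i j, |B i j| ≤ M) :
    ∀ ε : ℝ, 0 < ε → ρ + ε < 1 →
      ∃ C : ℝ, ∀ (k : ℕ) (w : Fin k → Bool),
        ‖(List.ofFn (fun i => if w i then A else B)).prod‖ ≤ C * (ρ + ε) ^ k := by
  intro ε hε hρε
  by_cases hn : n = 0
  · refine ⟨0, fun k w => ?_⟩
    subst hn
    rw [zero_mul]
    exact rowsum_norm_le 0 _ 0 le_rfl (fun i => i.elim0)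
  -- now n ≥ 1
  have hnpos : 0 < n := Nat.pos_of_ne_zero hn
  have hρ0 : 0 ≤ ρ := le_trans (abs_nonneg _) (hAdiag ⟨0, hnpos⟩)
  have hρε0 : 0 < ρ + ε := by linarith
  -- choose δ
  set δ : ℝ := min 1 (ε / (n * M + 1)) with hδdef
  have hden : (0:ℝ) < n * M + 1 := by positivity
  have hδ0 : 0 < δ := lt_min one_pos (by positivity)
  have hδ1 : δ ≤ 1 := min_le_left _ _
  have hδε : (n : ℝ) * M * δ ≤ ε := by
    have h1 : δ ≤ ε / (n * M + 1) := min_le_right _ _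
    rw [le_div_iff₀ hden] at h1
    nlinarith [mul_pos (mul_pos (Nat.cast_pos.mpr hnpos) hM) hδ0]
  set d : Fin n → ℝ := fun i => δ ^ (i : ℕ) with hddef
  have hd0 : ∀ i, 0 < d i := fun i => pow_pos hδ0 _
  set D : Matrix (Fin n) (Fin n) ℝ := Matrix.diagonal d with hDdef
  set E : Matrix (Fin n) (Fin n) ℝ := Matrix.diagonal (fun i => (d i)⁻¹) with hEdef
  have hDE : D * E = 1 := by
    rw [hDdef, hEdef, Matrix.diagonal_mul_diagonal,
      show (fun i => d i * (d i)⁻¹) = fun _ => (1:ℝ) from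
        funext fun i => mul_inv_cancel₀ (hd0 i).ne', Matrix.diagonal_one]
  have hED : E * D = 1 := by
    rw [hDdef, hEdef, Matrix.diagonal_mul_diagonal,
      show (fun i => (d i)⁻¹ * d i) = fun _ => (1:ℝ) from
        funext fun i => inv_mul_cancel₀ (hd0 i).ne', Matrix.diagonal_one]
  -- key bound on conjugates
  have key : ∀ X : Matrix (Fin n) (Fin n) ℝ, X.BlockTriangular id →
      (∀ i, |X i i| ≤ ρ) → (∀ i j, |X i j| ≤ M) → ‖E * X * D‖ ≤ ρ + ε := by
    intro X hXtri hXdiag hXent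
    apply rowsum_norm_le _ _ _ hρε0.le
    intro i
    have hentry : ∀ j, (E * X * D) i j = (d i)⁻¹ * X i j * d j := by
      intro j
      rw [hDdef, hEdef, Matrix.mul_diagonal, Matrix.diagonal_mul]
    have hterm : ∀ j, j ≠ i → |(d i)⁻¹ * X i j * d j| ≤ M * δ := by
      intro j hj
      rcases lt_or_gt_of_ne hj with hlt | hgt
      · have : X i j = 0 := hXtri hlt
        rw [this]
        simp [mul_pos hM hδ0 |>.le]
      · -- i < j
        have hij : (i : ℕ) < (j : ℕ) := hgt
        have habs : |(d i)⁻¹ * X i j * d j| = |X i j| * ((d i)⁻¹ * d j) := by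
          rw [abs_mul, abs_mul, abs_inv, abs_of_pos (hd0 i), abs_of_pos (hd0 j)]
          ring
        have hpow : (d i)⁻¹ * d j = δ ^ ((j : ℕ) - (i : ℕ)) := by
          have hpm : δ ^ ((j : ℕ) - (i : ℕ)) * δ ^ (i : ℕ) = δ ^ (j : ℕ) :=
            pow_sub_mul_pow δ hij.le
          show (δ ^ (i : ℕ))⁻¹ * δ ^ (j : ℕ) = δ ^ ((j : ℕ) - (i : ℕ))
          rw [← hpm, mul_comm ((δ ^ (i:ℕ))⁻¹), mul_assoc,
            mul_inv_cancel₀ (pow_ne_zero _ hδ0.ne'), mul_one]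
        have hple : δ ^ ((j : ℕ) - (i : ℕ)) ≤ δ := by
          calc δ ^ ((j : ℕ) - (i : ℕ)) ≤ δ ^ 1 :=
                pow_le_pow_of_le_one hδ0.le hδ1 (by omega)
            _ = δ := pow_one δ
        rw [habs, hpow]
        exact mul_le_mul (hXent i j) hple (pow_nonneg hδ0.le _) hM.le
    calc ∑ j, |(E * X * D) i j| = ∑ j, |(d i)⁻¹ * X i j * d j| := by
          simp_rw [hentry]
      _ = |(d i)⁻¹ * X i i * d i| + ∑ j ∈ Finset.univ.erase i, |(d i)⁻¹ * X i j * d j| :=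
          (Finset.add_sum_erase _ _ (Finset.mem_univ i)).symm
      _ ≤ ρ + (n : ℝ) * M * δ := by
          have h1 : |(d i)⁻¹ * X i i * d i| ≤ ρ := by
            rw [show (d i)⁻¹ * X i i * d i = X i i by
              rw [mul_comm, ← mul_assoc, mul_inv_cancel₀ (hd0 i).ne', one_mul]]
            exact hXdiag i
          have h2 : ∑ j ∈ Finset.univ.erase i, |(d i)⁻¹ * X i j * d j| ≤
              ((Finset.univ.erase i).card : ℝ) * (M * δ) := by
            rw [← nsmul_eq_mul]
            exact Finset.sum_le_card_nsmul _ _ _ fun j hj =>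
              hterm j (Finset.ne_of_mem_erase hj)
          have h3 : ((Finset.univ.erase i).card : ℝ) ≤ (n : ℝ) := by
            have := Finset.card_erase_le (s := (Finset.univ : Finset (Fin n))) (a := i)
            simp only [Finset.card_univ, Fintype.card_fin] at this
            exact_mod_cast le_trans this le_rfl
          have h4 : ((Finset.univ.erase i).card : ℝ) * (M * δ) ≤ (n : ℝ) * (M * δ) :=
            mul_le_mul_of_nonneg_right h3 (by positivity)
          calc |(d i)⁻¹ * X i i * d i| + ∑ j ∈ Finset.univ.erase i, |(d i)⁻¹ * X i j * d j|
              ≤ ρ + (n : ℝ) * (M * δ) := add_le_add h1 (le_trans h2 h4)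
            _ = ρ + (n : ℝ) * M * δ := by ring
      _ ≤ ρ + ε := by linarith
  -- norm of 1
  have hone : ‖(1 : Matrix (Fin n) (Fin n) ℝ)‖ ≤ 1 := by
    haveI : Nonempty (Fin n) := ⟨⟨0, hnpos⟩⟩
    rw [← Matrix.diagonal_one, Matrix.linfty_opNorm_diagonal]
    exact norm_one.le
  refine ⟨‖D‖ * ‖E‖, fun k w => ?_⟩
  set l : List (Matrix (Fin n) (Fin n) ℝ) := List.ofFn (fun i => if w i then A else B) with hldef
  have hconj : (l.map fun X => E * X * D).prod = E * l.prod * D := conj_list_prod D E hDE hED l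
  have hprodeq : l.prod = D * (l.map fun X => E * X * D).prod * E := by
    rw [hconj]
    symm
    calc D * (E * l.prod * D) * E = (D * E) * l.prod * (D * E) := by
          simp only [mul_assoc]
      _ = l.prod := by rw [hDE, one_mul, mul_one]
  have hmemle : ∀ X ∈ (l.map fun X => E * X * D), ‖X‖ ≤ ρ + ε := by
    intro X hX
    rcases List.mem_map.mp hX with ⟨a, ha, rfl⟩
    rcases List.mem_ofFn.mp (hldef ▸ ha) with ⟨i, hi⟩
    by_cases hw : w i
    · rw [show a = A by rw [← hi]; simp [hw]]
      exact key A hAtri hAdiag hAent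
    · rw [show a = B by rw [← hi]; simp [hw]]
      exact key B hBtri hBdiag hBent
  have hlen : (l.map fun X => E * X * D).length = k := by
    simp [hldef]
  have hP : ‖(l.map fun X => E * X * D).prod‖ ≤ (ρ + ε) ^ k := by
    rw [← hlen]
    exact list_prod_norm_le _ hρε0.le hone _ hmemle
  calc ‖l.prod‖ = ‖D * (l.map fun X => E * X * D).prod * E‖ := by rw [← hprodeq]
    _ ≤ ‖D * (l.map fun X => E * X * D).prod‖ * ‖E‖ := norm_mul_le _ _
    _ ≤ ‖D‖ * ‖(l.map fun X => E * X * D).prod‖ * ‖E‖ :=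
        mul_le_mul_of_nonneg_right (norm_mul_le _ _) (norm_nonneg _)
    _ ≤ ‖D‖ * ((ρ + ε) ^ k) * ‖E‖ := by
        apply mul_le_mul_of_nonneg_right _ (norm_nonneg _)
        exact mul_le_mul_of_nonneg_left hP (norm_nonneg _)
    _ = ‖D‖ * ‖E‖ * (ρ + ε) ^ k := by ring
end

section
/- Let S̃ be an n×n upper-triangular nonnegative real matrix with all diagonal entries equal to values ζ_r ≥ 0, H = diag of positive scalars 2^{-R_r}, and γ_1 ∈ (0,1), γ_2 > ρ(S̃). Suppose for each r, 2^{R_r} > ζ_r/γ_1, so that ρ(S̃H/γ_1) < 1 and ρ(S̃/γ_2) < 1. Then for any switching sequence, the sequence ω̄(k+1) = (S̃H/γ_1) ω̄(k) or ω̄(k+1) = (S̃/γ_2) ω̄(k) starting from any ω̄(0) remains bounded: there exists E with ‖ω̄(k)‖_∞ ≤ E for all k. -/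
theorem stmt7 (n : ℕ) (St H : Matrix (Fin n) (Fin n) ℝ) (R : Fin n → ℝ) (γ1 γ2 : ℝ)
    (hTri : St.BlockTriangular id) (hnn : ∀ i j, 0 ≤ St i j)
    (hH : H = Matrix.diagonal (fun i => (2:ℝ) ^ (-(R i))))
    (hγ1 : 0 < γ1) (hγ1' : γ1 < 1)
    (hrate : ∀ i, St i i / γ1 < (2:ℝ) ^ (R i))
    (hγ2 : ∀ i, St i i < γ2)
    (ω : ℕ → Fin n → ℝ) (sw : ℕ → Bool)
    (hupd : ∀ k, ω (k+1) =
      if sw k then (γ1⁻¹ • (St * H)).mulVec (ω k) else (γ2⁻¹ • St).mulVec (ω k)) :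
    ∃ E : ℝ, ∀ k i, |ω k i| ≤ E := by
  rcases Nat.eq_zero_or_pos n with hn | hn
  · subst hn; exact ⟨0, fun k i => i.elim0⟩
  have hne : Nonempty (Fin n) := ⟨⟨0, hn⟩⟩
  set i0 : Fin n := ⟨0, hn⟩ with hi0
  have hγ2pos : 0 < γ2 := lt_of_le_of_lt (hnn i0 i0) (hγ2 i0)
  set A : Bool → Matrix (Fin n) (Fin n) ℝ :=
    fun b => if b then γ1⁻¹ • (St * H) else γ2⁻¹ • St with hA
  have hpow : ∀ i : Fin n, (0:ℝ) < (2:ℝ) ^ (R i) := fun i =>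
    Real.rpow_pos_of_pos (by norm_num) _
  have hAent : ∀ i j, A true i j = γ1⁻¹ * (St i j * (2:ℝ) ^ (-(R j))) := by
    intro i j
    simp [hA, hH, Matrix.mul_diagonal, Matrix.smul_apply, smul_eq_mul]
  have hAent' : ∀ i j, A false i j = γ2⁻¹ * St i j := by
    intro i j
    simp [hA, Matrix.smul_apply, smul_eq_mul]
  have hAnn : ∀ b i j, 0 ≤ A b i j := by
    intro b i j
    cases b
    · rw [hAent']
      exact mul_nonneg (inv_nonneg.mpr hγ2pos.le) (hnn i j)
    · rw [hAent]
      exact mul_nonneg (inv_nonneg.mpr hγ1.le)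
        (mul_nonneg (hnn i j) (Real.rpow_pos_of_pos (by norm_num) _).le)
  have hAtri : ∀ b (i j : Fin n), j < i → A b i j = 0 := by
    intro b i j hij
    have h0 : St i j = 0 := hTri hij
    cases b
    · rw [hAent', h0, mul_zero]
    · rw [hAent, h0, zero_mul, mul_zero]
  have hAdiag : ∀ b i, A b i i < 1 := by
    intro b i
    cases b
    · rw [hAent']
      rw [inv_mul_lt_iff₀ hγ2pos, mul_one]
      exact hγ2 i
    · rw [hAent]
      have h1 : St i i * (2:ℝ) ^ (-(R i)) < γ1 := by
        have h2 : St i i < γ1 * (2:ℝ) ^ (R i) := by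
          have := hrate i
          rw [div_lt_iff₀ hγ1] at this
          linarith [this]
        rw [Real.rpow_neg (by norm_num)]
        rw [mul_inv_lt_iff₀ (hpow i)]
        linarith [h2]
      rw [inv_mul_lt_iff₀ hγ1, mul_one]
      exact h1
  -- weighted norm constants
  set c : ℝ := Finset.univ.sup' (Finset.univ_nonempty) (fun i => max (A true i i) (A false i i)) with hc
  have hcb : ∀ b i, A b i i ≤ c := by
    intro b i
    have := Finset.le_sup' (f := fun i => max (A true i i) (A false i i)) (Finset.mem_univ i)
    cases b
    · exact le_trans (le_max_right _ _) this
    · exact le_trans (le_max_left _ _) this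
  have hc1 : c < 1 := by
    rw [hc, Finset.sup'_lt_iff]
    intro i _
    exact max_lt (hAdiag true i) (hAdiag false i)
  have hc0 : 0 ≤ c := le_trans (hAnn true i0 i0) (hcb true i0)
  set S : ℝ := Finset.univ.sup' (Finset.univ_nonempty)
      (fun i => (∑ j, A true i j) + (∑ j, A false i j)) with hS
  have hSb : ∀ b i, (∑ j, A b i j) ≤ S := by
    intro b i
    have hle := Finset.le_sup' (f := fun i => (∑ j, A true i j) + (∑ j, A false i j))
      (Finset.mem_univ i)
    have h1 : 0 ≤ ∑ j, A true i j := Finset.sum_nonneg fun j _ => hAnn true i j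
    have h2 : 0 ≤ ∑ j, A false i j := Finset.sum_nonneg fun j _ => hAnn false i j
    cases b
    · linarith
    · linarith
  have hS0 : 0 ≤ S :=
    le_trans (Finset.sum_nonneg fun j _ => hAnn true i0 j) (hSb true i0)
  set ε : ℝ := (1 - c) / (1 + S) with hε
  have h1S : (0:ℝ) < 1 + S := by linarith
  have hεpos : 0 < ε := div_pos (by linarith) h1S
  have hε1 : ε ≤ 1 := by
    rw [hε, div_le_one h1S]; linarith
  have hεmul : ε * (1 + S) = 1 - c := div_mul_cancel₀ _ h1S.ne'
  have hcontr : c + ε * S ≤ 1 := by nlinarith [hεpos.le]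
  have key : ∀ b (i : Fin n), (∑ j, A b i j * ε ^ (j : ℕ)) ≤ ε ^ (i : ℕ) := by
    intro b i
    have hsplit : (∑ j, A b i j * ε ^ (j : ℕ)) =
        A b i i * ε ^ (i : ℕ) + ∑ j ∈ Finset.univ.erase i, A b i j * ε ^ (j : ℕ) := by
      exact (Finset.add_sum_erase _ _ (Finset.mem_univ i)).symm
    have hterm : ∀ j ∈ Finset.univ.erase i,
        A b i j * ε ^ (j : ℕ) ≤ A b i j * ε ^ ((i : ℕ) + 1) := by
      intro j hj
      rcases lt_trichotomy j i with h | h | h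
      · rw [hAtri b i j h]; simp
      · exact absurd h (Finset.ne_of_mem_erase hj)
      · have hij : (i : ℕ) + 1 ≤ (j : ℕ) := h
        exact mul_le_mul_of_nonneg_left
          (pow_le_pow_of_le_one hεpos.le hε1 hij) (hAnn b i j)
    have hsum2 : (∑ j ∈ Finset.univ.erase i, A b i j * ε ^ ((i : ℕ) + 1)) =
        ε ^ ((i : ℕ) + 1) * ∑ j ∈ Finset.univ.erase i, A b i j := by
      rw [Finset.mul_sum]; exact Finset.sum_congr rfl fun j _ => mul_comm _ _
    have hsum3 : (∑ j ∈ Finset.univ.erase i, A b i j) ≤ S := by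
      refine le_trans ?_ (hSb b i)
      exact Finset.sum_le_sum_of_subset_of_nonneg (Finset.erase_subset _ _)
        (fun j _ _ => hAnn b i j)
    have hεi : (0:ℝ) < ε ^ (i : ℕ) := pow_pos hεpos _
    calc (∑ j, A b i j * ε ^ (j : ℕ))
        ≤ A b i i * ε ^ (i : ℕ) + ε ^ ((i : ℕ) + 1) * S := by
          rw [hsplit]
          have := Finset.sum_le_sum hterm
          rw [hsum2] at this
          have h2 : ε ^ ((i : ℕ) + 1) * (∑ j ∈ Finset.univ.erase i, A b i j)
              ≤ ε ^ ((i : ℕ) + 1) * S :=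
            mul_le_mul_of_nonneg_left hsum3 (pow_pos hεpos _).le
          linarith
      _ = (A b i i + ε * S) * ε ^ (i : ℕ) := by ring
      _ ≤ 1 * ε ^ (i : ℕ) := by
          have := hcb b i
          have h3 : A b i i + ε * S ≤ 1 := by linarith [hcontr]
          exact mul_le_mul_of_nonneg_right h3 hεi.le
      _ = ε ^ (i : ℕ) := one_mul _
  set C : ℝ := ∑ i, |ω 0 i| / ε ^ (i : ℕ) with hC
  have hC0 : 0 ≤ C := Finset.sum_nonneg fun i _ =>
    div_nonneg (abs_nonneg _) (pow_pos hεpos _).le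
  have hbound0 : ∀ i, |ω 0 i| ≤ C * ε ^ (i : ℕ) := by
    intro i
    have h1 : |ω 0 i| / ε ^ (i : ℕ) ≤ C :=
      Finset.single_le_sum (f := fun i => |ω 0 i| / ε ^ (i : ℕ))
        (fun j _ => div_nonneg (abs_nonneg _) (pow_pos hεpos _).le) (Finset.mem_univ i)
    rwa [div_le_iff₀ (pow_pos hεpos _)] at h1
  have main : ∀ k i, |ω k i| ≤ C * ε ^ (i : ℕ) := by
    intro k
    induction k with
    | zero => exact hbound0
    | succ k ih =>
      intro i
      have hstep : ω (k + 1) = (A (sw k)).mulVec (ω k) := by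
        rw [hupd k, hA]
        cases sw k <;> simp
      rw [hstep]
      have hmv : (A (sw k)).mulVec (ω k) i = ∑ j, A (sw k) i j * ω k j := by
        simp [Matrix.mulVec, dotProduct]
      rw [hmv]
      calc |∑ j, A (sw k) i j * ω k j|
          ≤ ∑ j, |A (sw k) i j * ω k j| := Finset.abs_sum_le_sum_abs _ _
        _ = ∑ j, A (sw k) i j * |ω k j| := by
            refine Finset.sum_congr rfl fun j _ => ?_
            rw [abs_mul, abs_of_nonneg (hAnn _ i j)]
        _ ≤ ∑ j, A (sw k) i j * (C * ε ^ (j : ℕ)) :=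
            Finset.sum_le_sum fun j _ =>
              mul_le_mul_of_nonneg_left (ih j) (hAnn _ i j)
        _ = C * ∑ j, A (sw k) i j * ε ^ (j : ℕ) := by
            rw [Finset.mul_sum]; exact Finset.sum_congr rfl fun j _ => by ring
        _ ≤ C * ε ^ (i : ℕ) := mul_le_mul_of_nonneg_left (key _ i) hC0
  refine ⟨C, fun k i => ?_⟩
  calc |ω k i| ≤ C * ε ^ (i : ℕ) := main k i
    _ ≤ C * 1 := mul_le_mul_of_nonneg_left (pow_le_one₀ hεpos.le hε1) hC0
    _ = C := mul_one C
end

section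
/- Suppose a vector sequence e(k) ∈ ℝ^n and a positive vector sequence ω(k) ∈ ℝ^n_{>0} satisfy: (i) |e_l(0)| ≤ ω_l(0) for all components l; (ii) on attack-free steps e(k+1) = S̄(e(k) − ω(k)∘Q(e(k)/ω(k))) component-wise with |e_l(k) − ω_l(k)Q_l| ≤ ω_l(k)/2^{R_l} whenever |e_l(k)| ≤ ω_l(k), and ω(k+1) = S̃Hω(k); (iii) on attacked steps e(k+1) = S̄ e(k) and ω(k+1) = S̃ ω(k); where S̃ is entrywise ≥ |S̄| (the entrywise absolute value of S̄) and H = diag(2^{-R_l}). Then |e_l(k)| ≤ ω_l(k) for all l and all k ≥ 0. -/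
theorem stmt8 (n : ℕ) (Sb St H : Matrix (Fin n) (Fin n) ℝ)
    (hdom : ∀ i j, |Sb i j| ≤ St i j)
    (R : Fin n → ℕ)
    (hH : H = Matrix.diagonal (fun i => (2:ℝ) ^ (-(R i : ℝ))))
    (attack : ℕ → Prop) [DecidablePred attack]
    (e ω : ℕ → Fin n → ℝ) (Q : ℕ → Fin n → ℝ)
    (hωpos : ∀ k i, 0 < ω k i)
    (h0 : ∀ i, |e 0 i| ≤ ω 0 i)
    (hQ : ∀ k i, |e k i| ≤ ω k i → |e k i - ω k i * Q k i| ≤ ω k i * (2:ℝ) ^ (-(R i : ℝ)))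
    (hfree_e : ∀ k, ¬ attack k → e (k+1) = Sb.mulVec (fun i => e k i - ω k i * Q k i))
    (hfree_ω : ∀ k, ¬ attack k → ω (k+1) = (St * H).mulVec (ω k))
    (hatk_e : ∀ k, attack k → e (k+1) = Sb.mulVec (e k))
    (hatk_ω : ∀ k, attack k → ω (k+1) = St.mulVec (ω k)) :
    ∀ k i, |e k i| ≤ ω k i := by
  intro k
  induction k with
  | zero => exact h0
  | succ k ih =>
    intro i
    by_cases hA : attack k
    · rw [hatk_e k hA, hatk_ω k hA]
      simp only [Matrix.mulVec, dotProduct]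
      calc |∑ j, Sb i j * e k j| ≤ ∑ j, |Sb i j * e k j| := Finset.abs_sum_le_sum_abs _ _
        _ ≤ ∑ j, St i j * ω k j := by
            apply Finset.sum_le_sum
            intro j _
            rw [abs_mul]
            exact mul_le_mul (hdom i j) (ih j) (abs_nonneg _)
              (le_trans (abs_nonneg _) (hdom i j))
    · rw [hfree_e k hA, hfree_ω k hA]
      simp only [Matrix.mulVec, dotProduct, Matrix.mul_apply, hH,
        Matrix.diagonal, Matrix.of_apply]
      have hrhs : ∀ j, (∑ l, St i l * if l = j then (2:ℝ) ^ (-(R l : ℝ)) else 0)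
          = St i j * (2:ℝ) ^ (-(R j : ℝ)) := by
        intro j
        rw [Finset.sum_eq_single j]
        · simp
        · intro l _ hl; simp [hl]
        · simp
      calc |∑ j, Sb i j * (e k j - ω k j * Q k j)|
          ≤ ∑ j, |Sb i j * (e k j - ω k j * Q k j)| := Finset.abs_sum_le_sum_abs _ _
        _ ≤ ∑ j, (∑ l, St i l * if l = j then (2:ℝ) ^ (-(R l : ℝ)) else 0) * ω k j := by
            apply Finset.sum_le_sum
            intro j _
            rw [abs_mul, hrhs j, mul_assoc, mul_comm ((2:ℝ) ^ (-(R j : ℝ))) (ω k j)]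
            exact mul_le_mul (hdom i j) (hQ k j (ih j))
              (abs_nonneg _) (le_trans (abs_nonneg _) (hdom i j))
end

section
/- Suppose the sequence α(s_r) ∈ ℝ^n satisfies α(s_r) = M_r α(s_{r−1}) + w_{r−1} where each M_r is a product (B/γ_2)^{m_{r−1}} (G/γ_1) with ‖(B/γ_2)^m‖ ≤ C_2 for all m ≥ 0, and the switched products of (B/γ_2) and (G/γ_1) are uniformly exponentially stable (both upper triangular with spectral radii < 1), and ‖w_r‖ ≤ W for all r. Then there exists C_1 > 0 with ‖α(s_r)‖ ≤ C_1 for all r. -/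
attribute [local instance] Matrix.linftyOpNormedRing

open Matrix
open scoped ENNReal NNReal
attribute [local instance] Matrix.linfty_opNormOneClass


-- diagonal entries bound from spectral radius
lemma diag_lt_one {n : ℕ} (A : Matrix (Fin n) (Fin n) ℝ) (hA : A.BlockTriangular id)
    (hρ : spectralRadius ℂ (A.map Complex.ofReal) < 1) (i : Fin n) : |A i i| < 1 := by
  have htri : (A.map Complex.ofReal).BlockTriangular id := fun p q h => by
    simp [Matrix.map_apply, hA h]
  have hmem : (Complex.ofReal (A i i)) ∈ spectrum ℂ (A.map Complex.ofReal) := by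
    rw [spectrum.mem_iff]
    intro h
    rw [Matrix.isUnit_iff_isUnit_det] at h
    have htri2 : ((algebraMap ℂ (Matrix (Fin n) (Fin n) ℂ)) (Complex.ofReal (A i i))
        - A.map Complex.ofReal).BlockTriangular id := by
      intro p q hpq
      have hne : p ≠ q := (Fin.ne_of_lt hpq).symm
      simp [Matrix.algebraMap_matrix_apply, Matrix.map_apply, hA hpq, hne]
    rw [Matrix.det_of_upperTriangular htri2] at h
    have : ∏ j, ((algebraMap ℂ (Matrix (Fin n) (Fin n) ℂ)) (Complex.ofReal (A i i))
        - A.map Complex.ofReal) j j = 0 := by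
      apply Finset.prod_eq_zero (Finset.mem_univ i)
      simp [Matrix.algebraMap_matrix_apply, Matrix.map_apply]
    rw [this] at h
    exact h.ne_zero rfl
  have hle : (‖(Complex.ofReal (A i i))‖₊ : ℝ≥0∞) ≤ spectralRadius ℂ (A.map Complex.ofReal) :=
    le_iSup₂ (f := fun k (_ : k ∈ spectrum ℂ (A.map Complex.ofReal)) => (‖k‖₊ : ℝ≥0∞)) _ hmem
  have := lt_of_le_of_lt hle hρ
  rw [Complex.nnnorm_real] at this
  have h1 : (‖A i i‖₊ : ℝ≥0∞) < (1 : ℝ≥0) := by simpa using this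
  rw [ENNReal.coe_lt_coe] at h1
  have : ‖A i i‖ < 1 := h1
  simpa [Real.norm_eq_abs] using this

lemma conj_norm_le {n : ℕ} (A : Matrix (Fin n) (Fin n) ℝ) (hA : A.BlockTriangular id)
    (d ε : ℝ) (hd : ∀ i, |A i i| ≤ d) (hd0 : 0 ≤ d) (hε0 : 0 < ε) (hε1 : ε ≤ 1) :
    ‖(Matrix.diagonal fun i : Fin n => (ε ^ (i:ℕ))⁻¹) * A *
      (Matrix.diagonal fun i : Fin n => ε ^ (i:ℕ))‖ ≤ d + ε * ∑ p, ∑ q, |A p q| := by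
  set S := ∑ p, ∑ q, |A p q| with hS
  have hS0 : 0 ≤ S := Finset.sum_nonneg fun p _ => Finset.sum_nonneg fun q _ => abs_nonneg _
  set M := (Matrix.diagonal fun i : Fin n => (ε ^ (i:ℕ))⁻¹) * A *
      (Matrix.diagonal fun i : Fin n => ε ^ (i:ℕ)) with hM
  have hMij : ∀ i j, M i j = (ε ^ (i:ℕ))⁻¹ * A i j * ε ^ (j:ℕ) := by
    intro i j
    simp [hM, Matrix.mul_diagonal, Matrix.diagonal_mul]
  have hεp : ∀ k : ℕ, (0:ℝ) < ε ^ k := fun k => pow_pos hε0 k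
  have row : ∀ i, ∑ j, ‖M i j‖ ≤ d + ε * S := by
    intro i
    have hterm : ∀ j : Fin n, ‖M i j‖ ≤ (if j = i then d else 0) + ε * |A i j| := by
      intro j
      rw [hMij, Real.norm_eq_abs]
      rcases eq_or_ne j i with rfl | hne
      · have : (ε ^ (j:ℕ))⁻¹ * A j j * ε ^ (j:ℕ) = A j j := by
          field_simp
        rw [this, if_pos rfl]
        have := mul_nonneg hε0.le (abs_nonneg (A j j))
        linarith [hd j]
      · simp only [if_neg hne]
        rcases lt_or_gt_of_ne (fun h : (j:ℕ) = (i:ℕ) => hne (Fin.ext h)) with hlt | hgt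
        · -- j < i : entry zero
          have : A i j = 0 := hA (by simpa using hlt)
          simp [this]
        · -- i < j
          have hij : (i:ℕ) ≤ (j:ℕ) := le_of_lt hgt
          rw [abs_mul, abs_mul, abs_inv, abs_of_pos (hεp _), abs_of_pos (hεp _)]
          have hcol : (ε ^ (i:ℕ))⁻¹ * |A i j| * ε ^ (j:ℕ) = |A i j| * ε ^ ((j:ℕ) - (i:ℕ)) := by
            rw [pow_sub₀ _ (ne_of_gt hε0) hij]
            field_simp
          rw [hcol]
          have h1 : ε ^ ((j:ℕ) - (i:ℕ)) ≤ ε ^ 1 :=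
            pow_le_pow_of_le_one hε0.le hε1 (by omega)
          have := mul_le_mul_of_nonneg_left h1 (abs_nonneg (A i j))
          simpa [mul_comm] using this
    calc ∑ j, ‖M i j‖ ≤ ∑ j, ((if j = i then d else 0) + ε * |A i j|) :=
          Finset.sum_le_sum fun j _ => hterm j
      _ = d + ε * ∑ j, |A i j| := by
          rw [Finset.sum_add_distrib, Finset.sum_ite_eq' Finset.univ i fun _ => d,
            ← Finset.mul_sum]
          simp
      _ ≤ d + ε * S := by
          have : ∑ j, |A i j| ≤ S :=
            Finset.single_le_sum (f := fun p => ∑ q, |A p q|)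
              (fun p _ => Finset.sum_nonneg fun q _ => abs_nonneg _) (Finset.mem_univ i)
          nlinarith
  have hc0 : 0 ≤ d + ε * S := by positivity
  rw [Matrix.linfty_opNorm_def]
  have : (Finset.univ.sup fun i : Fin n => ∑ j, ‖M i j‖₊) ≤ ⟨d + ε * S, hc0⟩ := by
    apply Finset.sup_le
    intro i _
    apply NNReal.coe_le_coe.mp
    push_cast
    exact row i
  exact_mod_cast this
set_option maxHeartbeats 1000000 in
theorem stmt18 (n : ℕ) (B G : Matrix (Fin n) (Fin n) ℝ) (γ1 γ2 : ℝ)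
    (hγ1 : 0 < γ1) (hγ2 : 0 < γ2)
    (hBtri : B.BlockTriangular id) (hGtri : G.BlockTriangular id)
    (hρG : spectralRadius ℂ ((γ1⁻¹ • G).map Complex.ofReal) < 1)
    (hρB : spectralRadius ℂ ((γ2⁻¹ • B).map Complex.ofReal) < 1)
    (C2 : ℝ) (hC2 : ∀ m : ℕ, ‖(γ2⁻¹ • B) ^ m‖ ≤ C2)
    (μ : ℕ → ℕ) (w α : ℕ → Fin n → ℝ) (W α0 : ℝ)
    (hw : ∀ r, ‖w r‖ ≤ W) (hα0 : ‖α 0‖ ≤ α0)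
    (hrec : ∀ r, α (r+1) = ((γ2⁻¹ • B) ^ (μ r) * (γ1⁻¹ • G)).mulVec (α r) + w r) :
    ∃ C1 : ℝ, ∀ r, ‖α r‖ ≤ C1 := by
  rcases Nat.eq_zero_or_pos n with rfl | hn
  · exact ⟨0, fun r => by simp [Subsingleton.elim (α r) 0]⟩
  haveI : Nonempty (Fin n) := Fin.pos_iff_nonempty.mp hn
  set A1 := γ1⁻¹ • G with hA1
  set A2 := γ2⁻¹ • B with hA2
  have hA1tri : A1.BlockTriangular id := fun p q h => by
    simp [hA1, Matrix.smul_apply, hGtri h]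
  have hA2tri : A2.BlockTriangular id := fun p q h => by
    simp [hA2, Matrix.smul_apply, hBtri h]
  have hd1 : ∀ i, |A1 i i| < 1 := diag_lt_one A1 hA1tri hρG
  have hd2 : ∀ i, |A2 i i| < 1 := diag_lt_one A2 hA2tri hρB
  -- uniform diagonal bound
  set d : ℝ := Finset.univ.sup' Finset.univ_nonempty
      (fun i : Fin n => max |A1 i i| |A2 i i|) with hdDef
  have hdlt : d < 1 :=
    (Finset.sup'_lt_iff _).mpr fun i _ => max_lt (hd1 i) (hd2 i)
  obtain ⟨i0⟩ := ‹Nonempty (Fin n)›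
  have hd0 : 0 ≤ d :=
    le_trans (le_trans (abs_nonneg (A1 i0 i0)) (le_max_left _ _))
      (Finset.le_sup' (f := fun i : Fin n => max |A1 i i| |A2 i i|) (Finset.mem_univ i0))
  have hdA1 : ∀ i, |A1 i i| ≤ d := fun i =>
    le_trans (le_max_left _ _) (Finset.le_sup' (f := fun i : Fin n => max |A1 i i| |A2 i i|) (Finset.mem_univ i))
  have hdA2 : ∀ i, |A2 i i| ≤ d := fun i =>
    le_trans (le_max_right _ _) (Finset.le_sup' (f := fun i : Fin n => max |A1 i i| |A2 i i|) (Finset.mem_univ i))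
  set S1 := ∑ p, ∑ q, |A1 p q| with hS1
  set S2 := ∑ p, ∑ q, |A2 p q| with hS2
  have hS10 : 0 ≤ S1 := Finset.sum_nonneg fun p _ => Finset.sum_nonneg fun q _ => abs_nonneg _
  have hS20 : 0 ≤ S2 := Finset.sum_nonneg fun p _ => Finset.sum_nonneg fun q _ => abs_nonneg _
  set S := max S1 S2 with hS
  have hS0 : 0 ≤ S := le_trans hS10 (le_max_left _ _)
  set ε := min 1 ((1 - d) / (2 * (S + 1))) with hε
  have hε0 : 0 < ε := lt_min one_pos (div_pos (by linarith) (by positivity))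
  have hε1 : ε ≤ 1 := min_le_left _ _
  set c : ℝ := (1 + d) / 2 with hc
  have hc1 : c < 1 := by rw [hc]; linarith
  have hc0 : 0 ≤ c := by rw [hc]; linarith
  have hkey : ∀ S' : ℝ, S' ≤ S → 0 ≤ S' → d + ε * S' ≤ c := by
    intro S' hS' hS'0
    have h1 : ε ≤ (1 - d) / (2 * (S + 1)) := min_le_right _ _
    have h2 : ε * S' ≤ ((1 - d) / (2 * (S + 1))) * S :=
      mul_le_mul h1 hS' hS'0 (le_of_lt (div_pos (by linarith) (by positivity)))
    have h3 : ((1 - d) / (2 * (S + 1))) * S ≤ (1 - d) / 2 := by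
      rw [div_mul_eq_mul_div, div_le_div_iff₀ (by positivity) (by norm_num)]
      nlinarith
    rw [hc]; linarith
  set D : Matrix (Fin n) (Fin n) ℝ := Matrix.diagonal fun i : Fin n => ε ^ (i:ℕ) with hD
  set E : Matrix (Fin n) (Fin n) ℝ := Matrix.diagonal fun i : Fin n => (ε ^ (i:ℕ))⁻¹ with hE
  have hED : E * D = 1 := by
    rw [hE, hD, Matrix.diagonal_mul_diagonal]
    have : (fun i : Fin n => (ε ^ (i:ℕ))⁻¹ * ε ^ (i:ℕ)) = fun _ => (1:ℝ) :=
      funext fun i => inv_mul_cancel₀ (pow_pos hε0 _).ne'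
    rw [this, Matrix.diagonal_one]
  have hDE : D * E = 1 := by
    rw [hE, hD, Matrix.diagonal_mul_diagonal]
    have : (fun i : Fin n => ε ^ (i:ℕ) * (ε ^ (i:ℕ))⁻¹) = fun _ => (1:ℝ) :=
      funext fun i => mul_inv_cancel₀ (pow_pos hε0 _).ne'
    rw [this, Matrix.diagonal_one]
  have hGn : ‖E * A1 * D‖ ≤ c :=
    le_trans (conj_norm_le A1 hA1tri d ε hdA1 hd0 hε0 hε1)
      (hkey S1 (le_max_left _ _) hS10)
  have hBn : ‖E * A2 * D‖ ≤ c :=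
    le_trans (conj_norm_le A2 hA2tri d ε hdA2 hd0 hε0 hε1)
      (hkey S2 (le_max_right _ _) hS20)
  have hpow : ∀ (X : Matrix (Fin n) (Fin n) ℝ) (m : ℕ), (E * X * D) ^ m = E * X ^ m * D := by
    intro X m
    induction m with
    | zero => rw [pow_zero, pow_zero, mul_one, hED]
    | succ m ih =>
        rw [pow_succ, ih, pow_succ]
        simp only [mul_assoc]
        rw [← mul_assoc D E, hDE, one_mul]
  have hM' : ∀ r, ‖E * (A2 ^ (μ r) * A1) * D‖ ≤ c := by
    intro r
    have heq : E * (A2 ^ (μ r) * A1) * D = (E * A2 * D) ^ (μ r) * (E * A1 * D) := by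
      rw [hpow]
      simp only [mul_assoc]
      rw [← mul_assoc D E, hDE, one_mul]
    rw [heq]
    calc ‖(E * A2 * D) ^ (μ r) * (E * A1 * D)‖
        ≤ ‖(E * A2 * D) ^ (μ r)‖ * ‖E * A1 * D‖ := norm_mul_le _ _
      _ ≤ 1 * c := by
          apply mul_le_mul _ hGn (norm_nonneg _) zero_le_one
          calc ‖(E * A2 * D) ^ (μ r)‖ ≤ ‖E * A2 * D‖ ^ (μ r) := norm_pow_le _ _
            _ ≤ c ^ (μ r) := pow_le_pow_left₀ (norm_nonneg _) hBn _
            _ ≤ 1 := pow_le_one₀ hc0 hc1.le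
      _ = c := one_mul c
  set β : ℕ → Fin n → ℝ := fun r => E.mulVec (α r) with hβ
  have hαβ : ∀ r, α r = D.mulVec (β r) := by
    intro r
    rw [hβ]
    rw [Matrix.mulVec_mulVec, hDE, Matrix.one_mulVec]
  have hW0 : 0 ≤ W := le_trans (norm_nonneg _) (hw 0)
  have hβrec : ∀ r, ‖β (r+1)‖ ≤ c * ‖β r‖ + ‖E‖ * W := by
    intro r
    have : β (r+1) = (E * (A2 ^ (μ r) * A1) * D).mulVec (β r) + E.mulVec (w r) := by
      simp only [hβ]
      rw [hrec r, Matrix.mulVec_add]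
      congr 1
      rw [Matrix.mulVec_mulVec, Matrix.mulVec_mulVec]
      congr 1
      simp only [mul_assoc]
      rw [hDE, mul_one]
    rw [this]
    calc ‖(E * (A2 ^ (μ r) * A1) * D).mulVec (β r) + E.mulVec (w r)‖
        ≤ ‖(E * (A2 ^ (μ r) * A1) * D).mulVec (β r)‖ + ‖E.mulVec (w r)‖ := norm_add_le _ _
      _ ≤ ‖E * (A2 ^ (μ r) * A1) * D‖ * ‖β r‖ + ‖E‖ * ‖w r‖ :=
          add_le_add (Matrix.linfty_opNorm_mulVec _ _) (Matrix.linfty_opNorm_mulVec _ _)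
      _ ≤ c * ‖β r‖ + ‖E‖ * W :=
          add_le_add (mul_le_mul_of_nonneg_right (hM' r) (norm_nonneg _))
            (mul_le_mul_of_nonneg_left (hw r) (norm_nonneg _))
  set K : ℝ := max ‖β 0‖ ((‖E‖ * W) / (1 - c)) with hK
  have hβbound : ∀ r, ‖β r‖ ≤ K := by
    intro r
    induction r with
    | zero => exact le_max_left _ _
    | succ r ih =>
        have h1 : ‖E‖ * W ≤ (1 - c) * K := by
          have hpos : (0:ℝ) < 1 - c := by linarith
          rw [mul_comm (1 - c) K, ← div_le_iff₀ hpos]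
          exact le_max_right _ _
        calc ‖β (r+1)‖ ≤ c * ‖β r‖ + ‖E‖ * W := hβrec r
          _ ≤ c * K + (1 - c) * K := add_le_add (mul_le_mul_of_nonneg_left ih hc0) h1
          _ = K := by ring
  refine ⟨‖D‖ * K, fun r => ?_⟩
  rw [hαβ r]
  calc ‖D.mulVec (β r)‖ ≤ ‖D‖ * ‖β r‖ := Matrix.linfty_opNorm_mulVec _ _
    _ ≤ ‖D‖ * K := mul_le_mul_of_nonneg_left (hβbound r) (norm_nonneg _)
end
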